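/- Let T be a string and 1 ≤ j ≤ |T| with lrs(T[1..j]) nonempty. Then the number of new distinct closed factors gained at step j satisfies |C(T[1..j])| - |C(T[1..j-1])| = |lrs(T[1..j])| - |lrs(lrs(T[1..j]))|. -/

import Mathlib

variable {α : Type*} [DecidableEq α]

/-- Number of occurrences of `s` as a factor of `w` (starting positions, 0-indexed). -/
def countOcc (s w : List α) : ℕ :=
  ((Finset.range (w.length + 1)).filter (fun i => s <+: w.drop i)).card

/-- `b` is a border of `w`. -/
def IsBorder (b w : List α) : Prop := b ≠ w ∧ b <+: w ∧ b <:+ w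

/-- The longest border of `w`. -/
def bord (w : List α) : List α :=
  w.take (((Finset.range w.length).filter (fun k => w.take k <:+ w)).sup id)

/-- A string is closed if its length is one, or it has a nonempty border occurring
exactly twice in it. -/
def IsClosedStr (w : List α) : Prop :=
  w.length = 1 ∨ ∃ b : List α, b ≠ [] ∧ IsBorder b w ∧ countOcc b w = 2

/-- The longest repeating suffix of `w` (the empty string if none). -/
def lrs (w : List α) : List α :=
  w.drop (w.length -
    ((Finset.range (w.length + 1)).filter
      (fun k => 2 ≤ countOcc (w.drop (w.length - k)) w)).sup id)

/-- `u` is a factor (contiguous substring) of `w`. -/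
def IsFactor (u w : List α) : Prop := ∃ s t : List α, w = s ++ u ++ t

/-- The set of all factors of `w`. -/
def factors (w : List α) : Finset (List α) :=
  (Finset.range (w.length + 1) ×ˢ Finset.range (w.length + 1)).image
    (fun p => (w.drop p.1).take p.2)

/-- The set of distinct closed factors of `w`. -/
noncomputable def closedFactors (w : List α) : Finset (List α) :=
  @Finset.filter _ IsClosedStr (Classical.decPred _) (factors w)


set_option linter.unusedSectionVars false

def occSet (s w : List α) : Finset ℕ :=
  (Finset.range (w.length + 1)).filter (fun i => s <+: w.drop i)

lemma countOcc_eq_card (s w : List α) : countOcc s w = (occSet s w).card := rfl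

lemma mem_occSet {s w : List α} {i : ℕ} :
    i ∈ occSet s w ↔ i ≤ w.length ∧ s <+: w.drop i := by
  simp [occSet, Nat.lt_succ_iff]

lemma mem_occSet_end_le {s w : List α} {i : ℕ} (h : i ∈ occSet s w) :
    i + s.length ≤ w.length := by
  rw [mem_occSet] at h
  have h2 := h.2.length_le
  rw [List.length_drop] at h2
  omega

lemma suffix_eq_drop {u w : List α} (h : u <:+ w) : u = w.drop (w.length - u.length) :=
  List.suffix_iff_eq_drop.mp h

lemma suffix_mem_occSet {u w : List α} (h : u <:+ w) : w.length - u.length ∈ occSet u w :=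
  mem_occSet.mpr ⟨Nat.sub_le _ _, by rw [← suffix_eq_drop h]⟩

lemma two_le_countOcc_of {u w : List α} {a b : ℕ} (ha : a ∈ occSet u w)
    (hb : b ∈ occSet u w) (hab : a ≠ b) : 2 ≤ countOcc u w := by
  rw [countOcc_eq_card]
  exact Finset.one_lt_card.mpr ⟨a, ha, b, hb, hab⟩

lemma exists_early_occ {u w : List α} (h2 : 2 ≤ countOcc u w) :
    ∃ i ∈ occSet u w, i + u.length < w.length := by
  rw [countOcc_eq_card] at h2
  obtain ⟨a, ha, b, hb, hab⟩ := Finset.one_lt_card.mp h2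
  have ha' := mem_occSet_end_le ha
  have hb' := mem_occSet_end_le hb
  rcases lt_or_gt_of_ne hab with h | h
  · exact ⟨a, ha, by omega⟩
  · exact ⟨b, hb, by omega⟩

lemma drop_add (S : List α) (a b : ℕ) : S.drop (a + b) = (S.drop a).drop b :=
  by rw [List.drop_drop]

lemma occ_translate {u v w : List α} {i : ℕ} (huv : u <:+ v) (h : v <+: w.drop i) :
    u <+: w.drop (i + (v.length - u.length)) := by
  obtain ⟨x, rfl⟩ := huv
  obtain ⟨r, hr⟩ := h
  have hxl : (x ++ u).length - u.length = x.length := by simp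
  rw [hxl, drop_add, ← hr, List.append_assoc, List.drop_left]
  exact List.prefix_append u r

lemma countOcc_mono_suffix {u v w : List α} (huv : u <:+ v) :
    countOcc v w ≤ countOcc u w := by
  rcases eq_or_ne v [] with rfl | hv
  · rw [List.suffix_nil.mp huv]
  · rw [countOcc_eq_card, countOcc_eq_card]
    apply Finset.card_le_card_of_injOn (fun i => i + (v.length - u.length))
    · intro i hi
      have h1 := mem_occSet_end_le hi
      have h2 := huv.length_le
      simp only [Finset.mem_coe, mem_occSet] at hi ⊢
      exact ⟨by omega, occ_translate huv hi.2⟩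
    · intro a _ b _ h
      dsimp only at h
      omega

lemma countOcc_drop (u : List α) {S : List α} {d : ℕ} (hd : d ≤ S.length) :
    countOcc u (S.drop d) = ((occSet u S).filter (fun i => d ≤ i)).card := by
  rw [countOcc_eq_card]
  apply Finset.card_bij (fun t _ => d + t)
  · intro t ht
    rw [mem_occSet] at ht
    rw [List.length_drop] at ht
    obtain ⟨ht1, ht2⟩ := ht
    rw [← drop_add] at ht2
    rw [Finset.mem_filter, mem_occSet]
    exact ⟨⟨by omega, ht2⟩, by omega⟩
  · intro a _ b _ h
    omega
  · intro i hi
    rw [Finset.mem_filter, mem_occSet] at hi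
    refine ⟨i - d, ?_, by omega⟩
    rw [mem_occSet, List.length_drop, ← drop_add]
    have : d + (i - d) = i := by omega
    rw [this]
    exact ⟨by omega, hi.1.2⟩

lemma countOcc_suffix_le {u w S : List α} (hw : w <:+ S) :
    countOcc u w ≤ countOcc u S := by
  have h := suffix_eq_drop hw
  rw [h, countOcc_drop u (Nat.sub_le _ _), countOcc_eq_card]
  exact Finset.card_le_card (Finset.filter_subset _ _)

-- lrs lemmas
def lrsK (w : List α) : ℕ :=
  ((Finset.range (w.length + 1)).filter
      (fun k => 2 ≤ countOcc (w.drop (w.length - k)) w)).sup id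

lemma lrs_eq (w : List α) : lrs w = w.drop (w.length - lrsK w) := rfl

lemma lrsK_le (w : List α) : lrsK w ≤ w.length := by
  apply Finset.sup_le
  intro k hk
  have := (Finset.mem_filter.mp hk).1
  rw [Finset.mem_range] at this
  simpa using by omega

lemma lrs_length (w : List α) : (lrs w).length = lrsK w := by
  rw [lrs_eq, List.length_drop]
  have := lrsK_le w
  omega

lemma lrs_suffix (w : List α) : lrs w <:+ w := by
  rw [lrs_eq]; exact List.drop_suffix _ _

lemma lrs_two_le {w : List α} (h : lrs w ≠ []) : 2 ≤ countOcc (lrs w) w := by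
  set s := (Finset.range (w.length + 1)).filter
      (fun k => 2 ≤ countOcc (w.drop (w.length - k)) w) with hs
  have hne : s.Nonempty := by
    by_contra h'
    rw [Finset.not_nonempty_iff_eq_empty] at h'
    have hK : lrsK w = 0 := by rw [lrsK, ← hs, h']; simp
    apply h
    rw [lrs_eq, hK]
    simp
  obtain ⟨k, hk, hk2⟩ := Finset.exists_mem_eq_sup s hne id
  have hKk : lrsK w = k := hk2
  have := (Finset.mem_filter.mp hk).2
  rw [lrs_eq, hKk]
  exact this

lemma lrs_max {u w : List α} (hu : u <:+ w) (h2 : 2 ≤ countOcc u w) :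
    u.length ≤ (lrs w).length := by
  rw [lrs_length]
  have h1 : u.length ≤ w.length := hu.length_le
  have hmem : u.length ∈ (Finset.range (w.length + 1)).filter
      (fun k => 2 ≤ countOcc (w.drop (w.length - k)) w) := by
    refine Finset.mem_filter.mpr ⟨Finset.mem_range.mpr (by omega), ?_⟩
    rw [← suffix_eq_drop hu]
    exact h2
  exact Finset.le_sup (f := id) hmem

-- factors and infix
lemma infix_iff_occ {u S : List α} : u <:+: S ↔ ∃ i, i ∈ occSet u S := by
  constructor
  · rintro ⟨s, t, rfl⟩
    refine ⟨s.length, mem_occSet.mpr ⟨by simp, ?_⟩⟩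
    rw [List.append_assoc, List.drop_left]
    exact List.prefix_append u t
  · rintro ⟨i, hi⟩
    exact ((mem_occSet.mp hi).2.isInfix).trans (List.drop_suffix i S).isInfix

lemma mem_factors {u w : List α} : u ∈ factors w ↔ u <:+: w := by
  constructor
  · intro h
    rw [factors, Finset.mem_image] at h
    obtain ⟨p, _, rfl⟩ := h
    exact (List.take_prefix _ _).isInfix.trans (List.drop_suffix _ _).isInfix
  · rintro ⟨s, t, rfl⟩
    rw [factors, Finset.mem_image]
    refine ⟨(s.length, u.length), ?_, ?_⟩
    · rw [Finset.mem_product, Finset.mem_range, Finset.mem_range]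
      constructor <;> simp <;> omega
    · show ((s ++ u ++ t).drop s.length).take u.length = u
      rw [List.append_assoc, List.drop_left, List.take_left]

lemma take_infix {u S : List α} {m : ℕ} :
    u <:+: S.take m ↔ ∃ i ∈ occSet u S, i + u.length ≤ m := by
  constructor
  · intro h
    obtain ⟨i, hi⟩ := infix_iff_occ.mp h
    have hend := by
      have h2 := (mem_occSet.mp hi).2.length_le
      rw [List.length_drop, List.length_take] at h2
      exact h2
    have hi1 := (mem_occSet.mp hi).1
    rw [List.length_take] at hi1
    have hocc : u <+: S.drop i := by
      have h3 := (mem_occSet.mp hi).2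
      rw [List.drop_take] at h3
      exact h3.trans (List.take_prefix _ _)
    exact ⟨i, mem_occSet.mpr ⟨by omega, hocc⟩, by omega⟩
  · rintro ⟨i, hi, hend⟩
    have hocc := (mem_occSet.mp hi).2
    have h1 : u <+: (S.drop i).take (m - i) := by
      have h2 : u = (S.drop i).take u.length := List.prefix_iff_eq_take.mp hocc
      rw [h2]
      exact List.take_isPrefix_take.mpr (Or.inl (by omega))
    rw [← List.drop_take] at h1
    exact h1.isInfix.trans (List.drop_suffix _ _).isInfix

lemma closed_ne_nil {w : List α} (h : IsClosedStr w) : w ≠ [] := by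
  rintro rfl
  rcases h with h1 | ⟨b, hbne, ⟨_, hbp, _⟩, _⟩
  · simp at h1
  · exact hbne (List.prefix_nil.mp hbp)

-- prevOcc
def prevOcc (u S : List α) : ℕ :=
  ((occSet u S).filter (fun i => i + u.length < S.length)).sup id

lemma prevOcc_spec {u S : List α} (h2 : 2 ≤ countOcc u S) :
    prevOcc u S ∈ occSet u S ∧ prevOcc u S + u.length < S.length ∧
      ∀ i ∈ occSet u S, i + u.length < S.length → i ≤ prevOcc u S := by
  have hne : ((occSet u S).filter (fun i => i + u.length < S.length)).Nonempty := by
    obtain ⟨i, hi, hie⟩ := exists_early_occ h2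
    exact ⟨i, Finset.mem_filter.mpr ⟨hi, hie⟩⟩
  obtain ⟨i, hi, hieq⟩ := Finset.exists_mem_eq_sup _ hne id
  have hp : prevOcc u S = i := hieq
  rw [Finset.mem_filter] at hi
  refine ⟨hp ▸ hi.1, hp ▸ hi.2, fun a ha hae => ?_⟩
  exact Finset.le_sup (f := id) (Finset.mem_filter.mpr ⟨ha, hae⟩)

lemma third_occ {b w S : List α} (hw : w <:+ S) (hbp : b <+: w) (hbs : b <:+ w)
    (h2 : countOcc b w = 2) {i : ℕ} (hi : i ∈ occSet b S)
    (hgt : S.length - w.length < i) (hend : i + b.length < S.length) : False := by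
  have hwl : w.length ≤ S.length := hw.length_le
  have hweq : w = S.drop (S.length - w.length) := suffix_eq_drop hw
  set q := i - (S.length - w.length) with hq
  have hiq : (S.length - w.length) + q = i := by omega
  have hqb : q + b.length < w.length := by omega
  have hqocc : q ∈ occSet b w := by
    rw [mem_occSet]
    refine ⟨by omega, ?_⟩
    have hd : w.drop q = S.drop i := by
      rw [hweq, ← drop_add, hiq]
    rw [hd]
    exact (mem_occSet.mp hi).2
  have h0 : 0 ∈ occSet b w := mem_occSet.mpr ⟨Nat.zero_le _, by simpa using hbp⟩
  have he : w.length - b.length ∈ occSet b w := suffix_mem_occSet hbs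
  have hbl : b.length < w.length := by omega
  have hq1 : 1 ≤ q := by omega
  have hsub : ({0, q, w.length - b.length} : Finset ℕ) ⊆ occSet b w := by
    intro x hx
    simp only [Finset.mem_insert, Finset.mem_singleton] at hx
    rcases hx with rfl | rfl | rfl
    · exact h0
    · exact hqocc
    · exact he
  have hcard : ({0, q, w.length - b.length} : Finset ℕ).card = 3 := by
    rw [Finset.card_insert_of_notMem (by simp; omega),
      Finset.card_insert_of_notMem (by simp; omega), Finset.card_singleton]
  have h3 : 3 ≤ (occSet b w).card := hcard ▸ Finset.card_le_card hsub
  rw [countOcc_eq_card] at h2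
  omega

lemma border_unique {w b b' : List α} (hb : IsBorder b w) (h2 : countOcc b w = 2)
    (hb' : IsBorder b' w) (h2' : countOcc b' w = 2) : b = b' := by
  have key : ∀ (c c' : List α), IsBorder c w → countOcc c w = 2 → IsBorder c' w →
      c.length < c'.length → False := by
    rintro c c' ⟨hcnw, hcp, hcs⟩ h2c ⟨hc'nw, hc'p, hc's⟩ hlt
    have hclen : c.length ≤ w.length := hcp.length_le
    have hlen' : c'.length < w.length :=
      lt_of_le_of_ne hc'p.length_le (fun h => hc'nw (hc'p.eq_of_length h))
    have h0 : 0 ∈ occSet c w := mem_occSet.mpr ⟨Nat.zero_le _, by simpa using hcp⟩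
    have h1 : w.length - c'.length ∈ occSet c w := by
      have hcc' : c <+: c' := List.prefix_of_prefix_length_le hcp hc'p (le_of_lt hlt)
      exact mem_occSet.mpr ⟨by omega, by rw [← suffix_eq_drop hc's]; exact hcc'⟩
    have h2m : w.length - c.length ∈ occSet c w := suffix_mem_occSet hcs
    have hsub : ({0, w.length - c'.length, w.length - c.length} : Finset ℕ) ⊆ occSet c w := by
      intro x hx
      simp only [Finset.mem_insert, Finset.mem_singleton] at hx
      rcases hx with rfl | rfl | rfl
      · exact h0
      · exact h1
      · exact h2m
    have hcard : ({0, w.length - c'.length, w.length - c.length} : Finset ℕ).card = 3 := by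
      rw [Finset.card_insert_of_notMem (by simp; omega),
        Finset.card_insert_of_notMem (by simp; omega), Finset.card_singleton]
    have h3 : 3 ≤ (occSet c w).card := hcard ▸ Finset.card_le_card hsub
    rw [countOcc_eq_card] at h2c
    omega
  rcases lt_trichotomy b.length b'.length with h | h | h
  · exact absurd (key b b' hb h2 hb' h) (fun f => f)
  · rw [List.prefix_iff_eq_take.mp hb.2.1, List.prefix_iff_eq_take.mp hb'.2.1, h]
  · exact absurd (key b' b hb' h2' hb h) (fun f => f)

lemma two_le_iff_le_lrs {u S : List α} (hS : lrs S ≠ []) (hu : u <:+ S) :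
    2 ≤ countOcc u S ↔ u.length ≤ (lrs S).length := by
  constructor
  · exact lrs_max hu
  · intro h
    have h1 : u <:+ lrs S := List.suffix_of_suffix_length_le hu (lrs_suffix S) h
    exact le_trans (lrs_two_le hS) (countOcc_mono_suffix h1)

lemma construct {S : List α} (hlrs : lrs S ≠ []) {k : ℕ}
    (hk1 : (lrs (lrs S)).length < k) (hk2 : k ≤ (lrs S).length) :
    S.drop (prevOcc (S.drop (S.length - k)) S) <:+ S ∧
    (lrs S).length < (S.drop (prevOcc (S.drop (S.length - k)) S)).length ∧
    S.drop (S.length - k) ≠ [] ∧ (S.drop (S.length - k)).length = k ∧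
    IsBorder (S.drop (S.length - k)) (S.drop (prevOcc (S.drop (S.length - k)) S)) ∧
    countOcc (S.drop (S.length - k)) (S.drop (prevOcc (S.drop (S.length - k)) S)) = 2 := by
  set u := S.drop (S.length - k) with hu
  have hLn : (lrs S).length ≤ S.length := (lrs_suffix S).length_le
  have hkn : k ≤ S.length := le_trans hk2 hLn
  have hulen : u.length = k := by rw [hu, List.length_drop]; omega
  have husuf : u <:+ S := List.drop_suffix _ _
  have hune : u ≠ [] := by
    intro h
    rw [h] at hulen
    simp at hulen
    omega
  have hu2 : 2 ≤ countOcc u S := (two_le_iff_le_lrs hlrs husuf).mpr (by omega)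
  obtain ⟨hpmem, hpend, hpmax⟩ := prevOcc_spec hu2
  set p := prevOcc u S with hp
  set w := S.drop p with hw
  have hplt : p ≤ S.length := (mem_occSet.mp hpmem).1
  have hwlen : w.length = S.length - p := by rw [hw, List.length_drop]
  have hwsuf : w <:+ S := List.drop_suffix _ _
  have hulw : u.length < w.length := by omega
  have hupre : u <+: w := (mem_occSet.mp hpmem).2
  have husufw : u <:+ w := List.suffix_of_suffix_length_le husuf hwsuf (by omega)
  have hunew : u ≠ w := fun h => by rw [h] at hulw; omega
  have hpair : ({p, S.length - u.length} : Finset ℕ).card = 2 := by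
    rw [Finset.card_insert_of_notMem (by simp; omega), Finset.card_singleton]
  have hcnt : countOcc u w = 2 := by
    rw [hw, countOcc_drop u hplt]
    have hset : (occSet u S).filter (fun i => p ≤ i) = {p, S.length - u.length} := by
      apply Finset.Subset.antisymm
      · intro i hi
        rw [Finset.mem_filter] at hi
        obtain ⟨hio, hip⟩ := hi
        have hie := mem_occSet_end_le hio
        simp only [Finset.mem_insert, Finset.mem_singleton]
        rcases Nat.lt_or_ge (i + u.length) S.length with h | h
        · left
          have := hpmax i hio h
          omega
        · right
          omega
      · intro i hi
        simp only [Finset.mem_insert, Finset.mem_singleton] at hi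
        rcases hi with rfl | rfl
        · exact Finset.mem_filter.mpr ⟨hpmem, le_refl _⟩
        · exact Finset.mem_filter.mpr ⟨suffix_mem_occSet husuf, by omega⟩
    rw [hset]
    exact hpair
  have hwL : (lrs S).length < w.length := by
    by_contra hle
    push_neg at hle
    have hLsuf : lrs S <:+ S := lrs_suffix S
    have hLd : lrs S = S.drop (S.length - (lrs S).length) := suffix_eq_drop hLsuf
    have h2L : 2 ≤ countOcc u (lrs S) := by
      rw [hLd, countOcc_drop u (by omega)]
      have hsub : ({p, S.length - u.length} : Finset ℕ) ⊆
          (occSet u S).filter (fun i => S.length - (lrs S).length ≤ i) := by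
        intro x hx
        simp only [Finset.mem_insert, Finset.mem_singleton] at hx
        rcases hx with rfl | rfl
        · exact Finset.mem_filter.mpr ⟨hpmem, by omega⟩
        · exact Finset.mem_filter.mpr ⟨suffix_mem_occSet husuf, by omega⟩
      calc 2 = ({p, S.length - u.length} : Finset ℕ).card := hpair.symm
        _ ≤ _ := Finset.card_le_card hsub
    have husufL : u <:+ lrs S := List.suffix_of_suffix_length_le husuf hLsuf (by omega)
    have := lrs_max husufL h2L
    omega
  exact ⟨hwsuf, hwL, hune, hulen, ⟨hunew, hupre, husufw⟩, hcnt⟩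

lemma surj_aux {S w : List α} (hlrs : lrs S ≠ []) (hsuf : w <:+ S)
    (hwL : (lrs S).length < w.length) (hcl : IsClosedStr w) :
    ∃ k, (lrs (lrs S)).length < k ∧ k ≤ (lrs S).length ∧
      S.drop (prevOcc (S.drop (S.length - k)) S) = w := by
  have hLpos : 1 ≤ (lrs S).length := List.length_pos_iff.mpr hlrs
  rcases hcl with h1 | ⟨b, hbne, hbord, hb2⟩
  · omega
  obtain ⟨hbnw, hbp, hbs⟩ := hbord
  have hwn : w.length ≤ S.length := hsuf.length_le
  have hblw : b.length < w.length :=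
    lt_of_le_of_ne hbp.length_le (fun h => hbnw (hbp.eq_of_length h))
  have hbsufS : b <:+ S := hbs.trans hsuf
  have hwd : w = S.drop (S.length - w.length) := suffix_eq_drop hsuf
  have hb2S : 2 ≤ countOcc b S := by
    have := countOcc_suffix_le (u := b) hsuf
    omega
  have hkL : b.length ≤ (lrs S).length := lrs_max hbsufS hb2S
  have hbpos : 1 ≤ b.length := List.length_pos_iff.mpr hbne
  have hkL2 : (lrs (lrs S)).length < b.length := by
    by_contra hle
    push_neg at hle
    have hL2ne : lrs (lrs S) ≠ [] := by
      intro h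
      rw [h] at hle
      simp only [List.length_nil] at hle
      omega
    have hLsuf : lrs S <:+ S := lrs_suffix S
    have hL2suf : lrs (lrs S) <:+ lrs S := lrs_suffix (lrs S)
    have hL2len : (lrs (lrs S)).length ≤ (lrs S).length := hL2suf.length_le
    have hbL2 : b <:+ lrs (lrs S) :=
      List.suffix_of_suffix_length_le hbsufS (hL2suf.trans hLsuf) hle
    have h2L2 : 2 ≤ countOcc (lrs (lrs S)) (lrs S) := lrs_two_le hL2ne
    obtain ⟨t, ht, hte⟩ := exists_early_occ h2L2
    have hoccb : b <+: (lrs S).drop (t + ((lrs (lrs S)).length - b.length)) :=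
      occ_translate hbL2 (mem_occSet.mp ht).2
    set t' := t + ((lrs (lrs S)).length - b.length) with ht'
    have hLd : lrs S = S.drop (S.length - (lrs S).length) := suffix_eq_drop hLsuf
    have hLn : (lrs S).length ≤ S.length := hLsuf.length_le
    set i := S.length - (lrs S).length + t' with hi
    have hoccS : i ∈ occSet b S := by
      rw [mem_occSet]
      have hdrop : S.drop i = (lrs S).drop t' := by
        rw [hi, drop_add, ← hLd]
      constructor
      · omega
      · rw [hdrop]
        exact hoccb
    have hiend : i + b.length < S.length := by rw [hi, ht']; omega
    have higt : S.length - w.length < i := by rw [hi]; omega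
    exact third_occ hsuf hbp hbs hb2 hoccS higt hiend
  refine ⟨b.length, hkL2, hkL, ?_⟩
  have hbd : S.drop (S.length - b.length) = b := (suffix_eq_drop hbsufS).symm
  rw [hbd]
  obtain ⟨hpmem, hpend, hpmax⟩ := prevOcc_spec hb2S
  have hmem : S.length - w.length ∈ occSet b S := by
    rw [mem_occSet]
    exact ⟨by omega, by rw [← hwd]; exact hbp⟩
  have hle1 : S.length - w.length ≤ prevOcc b S := hpmax _ hmem (by omega)
  have hle2 : prevOcc b S ≤ S.length - w.length := by
    by_contra hgt
    push_neg at hgt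
    exact third_occ hsuf hbp hbs hb2 hpmem hgt hpend
  have heq : prevOcc b S = S.length - w.length := le_antisymm hle2 hle1
  rw [heq, ← hwd]


theorem stmt4 (T : List α) (j : ℕ) (hj1 : 1 ≤ j) (hj2 : j ≤ T.length)
    (hlrs : lrs (T.take j) ≠ []) :
    ((closedFactors (T.take j)).card : ℤ) - (closedFactors (T.take (j - 1))).card =
      ((lrs (T.take j)).length : ℤ) - (lrs (lrs (T.take j))).length := by
  classical
  set S := T.take j with hS
  have hSlen : S.length = j := by rw [hS, List.length_take]; omega
  have hS' : T.take (j - 1) = S.take (j - 1) := by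
    rw [hS, List.take_take]
    congr 1
    omega
  have hLlen : (lrs S).length ≤ S.length := (lrs_suffix S).length_le
  have hL2len : (lrs (lrs S)).length ≤ (lrs S).length := (lrs_suffix (lrs S)).length_le
  have hLpos : 1 ≤ (lrs S).length := List.length_pos_iff.mpr hlrs
  have hsub : closedFactors (S.take (j - 1)) ⊆ closedFactors S := by
    intro u hu
    rw [closedFactors, Finset.mem_filter] at hu ⊢
    exact ⟨mem_factors.mpr ((mem_factors.mp hu.1).trans
      (List.take_prefix (j - 1) S).isInfix), hu.2⟩
  have hdiff : ∀ w, w ∈ closedFactors S \ closedFactors (S.take (j - 1)) ↔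
      (w <:+ S ∧ (lrs S).length < w.length ∧ IsClosedStr w) := by
    intro w
    rw [Finset.mem_sdiff, closedFactors, closedFactors, Finset.mem_filter, Finset.mem_filter]
    constructor
    · rintro ⟨⟨hinf, hcl⟩, hnot⟩
      have hnotf : ¬ (w <:+: S.take (j - 1)) := fun h => hnot ⟨mem_factors.mpr h, hcl⟩
      obtain ⟨i, hi⟩ := infix_iff_occ.mp (mem_factors.mp hinf)
      have hile := mem_occSet_end_le hi
      have hsuf : w <:+ S := by
        rcases Nat.lt_or_ge (i + w.length) S.length with hlt | hge
        · exact absurd (take_infix.mpr ⟨i, hi, by omega⟩) hnotf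
        · have hd : (S.drop i).length = w.length := by
            rw [List.length_drop]
            omega
          have heq := (mem_occSet.mp hi).2.eq_of_length (by rw [hd])
          rw [heq]
          exact List.drop_suffix _ _
      refine ⟨hsuf, ?_, hcl⟩
      by_contra hle
      push_neg at hle
      have h2 : 2 ≤ countOcc w S := (two_le_iff_le_lrs hlrs hsuf).mpr hle
      obtain ⟨a, ha, hae⟩ := exists_early_occ h2
      exact hnotf (take_infix.mpr ⟨a, ha, by omega⟩)
    · rintro ⟨hsuf, hlen, hcl⟩
      refine ⟨⟨mem_factors.mpr hsuf.isInfix, hcl⟩, ?_⟩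
      rintro ⟨hf, -⟩
      obtain ⟨a, ha, hae⟩ := take_infix.mp (mem_factors.mp hf)
      have hb := suffix_mem_occSet hsuf
      have hwle : w.length ≤ S.length := hsuf.length_le
      have h2 : 2 ≤ countOcc w S := two_le_countOcc_of ha hb (by omega)
      have := lrs_max hsuf h2
      omega
  have hcard : (Finset.Ioc (lrs (lrs S)).length (lrs S).length).card =
      (closedFactors S \ closedFactors (S.take (j - 1))).card := by
    apply Finset.card_bij (fun k _ => S.drop (prevOcc (S.drop (S.length - k)) S))
    · intro k hk
      rw [Finset.mem_Ioc] at hk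
      obtain ⟨hws, hwl, hune, hulen, hbord, hcnt⟩ := construct hlrs hk.1 hk.2
      exact (hdiff _).mpr ⟨hws, hwl, Or.inr ⟨_, hune, hbord, hcnt⟩⟩
    · intro k1 hk1 k2 hk2 heq
      rw [Finset.mem_Ioc] at hk1 hk2
      obtain ⟨_, _, hune1, hulen1, hbord1, hcnt1⟩ := construct hlrs hk1.1 hk1.2
      obtain ⟨_, _, hune2, hulen2, hbord2, hcnt2⟩ := construct hlrs hk2.1 hk2.2
      rw [← heq] at hbord2 hcnt2
      have := border_unique hbord1 hcnt1 hbord2 hcnt2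
      rw [← hulen1, ← hulen2, this]
    · intro w hw
      rw [hdiff] at hw
      obtain ⟨hsuf, hwl, hcl⟩ := hw
      obtain ⟨k, h1, h2, h3⟩ := surj_aux hlrs hsuf hwl hcl
      exact ⟨k, Finset.mem_Ioc.mpr ⟨h1, h2⟩, h3⟩
  have hc1 : (closedFactors (S.take (j - 1))).card ≤ (closedFactors S).card :=
    Finset.card_le_card hsub
  have hc2 : (closedFactors S \ closedFactors (S.take (j - 1))).card =
      (closedFactors S).card - (closedFactors (S.take (j - 1))).card :=
    by rw [Finset.card_sdiff, Finset.inter_eq_left.mpr hsub]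
  have hIoc : (Finset.Ioc (lrs (lrs S)).length (lrs S).length).card =
      (lrs S).length - (lrs (lrs S)).length := Nat.card_Ioc _ _
  rw [hS']
  omega
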